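/- arXiv:0711.3642 — 2 statements merged into one kernel-verified Lean document; each statement's English description precedes it below -/
import Mathlib

section
/- Let 𝔇 = (B, d, Δ_d, ε_d) and 𝔠 = (A, c, Δ_c, ε_c) be comonads in a 2-category ℬ. A pair (q, α) with q : B ⟶ A and α : d ∘ q ⟶ q ∘ c is a right comonad-morphism from 𝔇 to 𝔠 (i.e., α is compatible with the comultiplications and counits) if and only if d ∘ q carries the structure of a 𝔇-𝔠-bicomodule, with left 𝔇-coaction Δ_d ▷ q and right 𝔠-coaction (d ◁ α) ∘ (Δ_d ▷ q). -/
open CategoryTheory CategoryTheory.Limits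

universe w v u

variable {𝒷 : Type u} [Bicategory.{w, v} 𝒷]

section

local infixr:81 " ◁ " => Bicategory.whiskerLeft
local infixl:81 " ▷ " => Bicategory.whiskerRight
local notation "α_" => Bicategory.associator
local notation "λ_" => Bicategory.leftUnitor
local notation "ρ_" => Bicategory.rightUnitor

/-- A comonad in a bicategory `𝒷`, consisting of a 0-cell `a`, a 1-cell `c : a ⟶ a`
and 2-cells `Δ : c ⟶ c ≫ c`, `ε : c ⟶ 𝟙 a` satisfying the coassociativity and
counit axioms (up to the associator and unitors). -/
structure Cmnd (a : 𝒷) where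
  c : a ⟶ a
  Δ : c ⟶ c ≫ c
  ε : c ⟶ 𝟙 a
  coassoc : Δ ≫ Δ ▷ c ≫ (α_ c c c).hom = Δ ≫ c ◁ Δ
  counit_left : Δ ≫ ε ▷ c ≫ (λ_ c).hom = 𝟙 c
  counit_right : Δ ≫ c ◁ ε ≫ (ρ_ c).hom = 𝟙 c

end

open CategoryTheory.Bicategory

/-- A right comonad-morphism `(q, α)` from the comonad `D` (over `b`) to the comonad `C`
(over `a`): `α : d ≫ q ⟶ q ≫ c` is compatible with the comultiplications and counits. -/
def IsRightComonadMorphism {a b : 𝒷} (D : Cmnd b) (C : Cmnd a)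
    (q : b ⟶ a) (α : D.c ≫ q ⟶ q ≫ C.c) : Prop :=
  (α ≫ q ◁ C.Δ ≫ (α_ q C.c C.c).inv
      = D.Δ ▷ q ≫ (α_ D.c D.c q).hom ≫ D.c ◁ α ≫ (α_ D.c q C.c).inv ≫ α ▷ C.c) ∧
  (α ≫ q ◁ C.ε ≫ (ρ_ q).hom = D.ε ▷ q ≫ (λ_ q).hom)

/-- A left comonad-morphism `(p, β)` from the comonad `D` (over `b`) to the comonad `C`
(over `a`): `β : p ≫ d ⟶ c ≫ p` is compatible with the comultiplications and counits. -/
def IsLeftComonadMorphism {a b : 𝒷} (D : Cmnd b) (C : Cmnd a)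
    (p : a ⟶ b) (β : p ≫ D.c ⟶ C.c ≫ p) : Prop :=
  (p ◁ D.Δ ≫ (α_ p D.c D.c).inv ≫ β ▷ D.c ≫ (α_ C.c p D.c).hom ≫ C.c ◁ β ≫
      (α_ C.c C.c p).inv = β ≫ C.Δ ▷ p) ∧
  (β ≫ C.ε ▷ p ≫ (λ_ p).hom = p ◁ D.ε ≫ (ρ_ p).hom)

/-- `m : b ⟶ a` together with a left `D`-coaction `lam` and a right `C`-coaction `rho`
is a `D`-`C`-bicomodule: both coactions are coassociative and counital and compatible. -/
def IsBicomodule {a b : 𝒷} (D : Cmnd b) (C : Cmnd a) (m : b ⟶ a)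
    (lam : m ⟶ D.c ≫ m) (rho : m ⟶ m ≫ C.c) : Prop :=
  (lam ≫ D.Δ ▷ m ≫ (α_ D.c D.c m).hom = lam ≫ D.c ◁ lam) ∧
  (lam ≫ D.ε ▷ m ≫ (λ_ m).hom = 𝟙 m) ∧
  (rho ≫ m ◁ C.Δ ≫ (α_ m C.c C.c).inv = rho ≫ rho ▷ C.c) ∧
  (rho ≫ m ◁ C.ε ≫ (ρ_ m).hom = 𝟙 m) ∧
  (rho ≫ lam ▷ C.c ≫ (α_ D.c m C.c).hom = lam ≫ D.c ◁ rho)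


section AuxComonadBicomodule

variable {a b : 𝒷}

/-- Cancellation: postcomposing with the counit recovers a 2-cell from its
image under `Δ ▷ q ≫ assoc ≫ d ◁ -`. -/
lemma aux_cancel (D : Cmnd b) (q : b ⟶ a) {m : b ⟶ a} {X Y : D.c ≫ q ⟶ m}
    (h : D.Δ ▷ q ≫ (α_ D.c D.c q).hom ≫ D.c ◁ X
       = D.Δ ▷ q ≫ (α_ D.c D.c q).hom ≫ D.c ◁ Y) : X = Y := by
  have key : ∀ Z : D.c ≫ q ⟶ m,
      D.Δ ▷ q ≫ (α_ D.c D.c q).hom ≫ D.c ◁ Z ≫ D.ε ▷ m ≫ (λ_ m).hom = Z := by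
    intro Z
    calc D.Δ ▷ q ≫ (α_ D.c D.c q).hom ≫ D.c ◁ Z ≫ D.ε ▷ m ≫ (λ_ m).hom
        = D.Δ ▷ q ≫ (α_ D.c D.c q).hom ≫ (D.c ◁ Z ≫ D.ε ▷ m) ≫ (λ_ m).hom := by
          simp only [Category.assoc]
      _ = D.Δ ▷ q ≫ (α_ D.c D.c q).hom ≫ (D.ε ▷ (D.c ≫ q) ≫ 𝟙 b ◁ Z) ≫ (λ_ m).hom := by
          rw [whisker_exchange]
      _ = (D.Δ ≫ D.ε ▷ D.c ≫ (λ_ D.c).hom) ▷ q ≫ Z := by bicategory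
      _ = Z := by rw [D.counit_left]; simp
  have h' := congrArg (fun t => t ≫ D.ε ▷ m ≫ (λ_ m).hom) h
  simp only [Category.assoc] at h'
  calc X = D.Δ ▷ q ≫ (α_ D.c D.c q).hom ≫ D.c ◁ X ≫ D.ε ▷ m ≫ (λ_ m).hom := (key X).symm
    _ = D.Δ ▷ q ≫ (α_ D.c D.c q).hom ≫ D.c ◁ Y ≫ D.ε ▷ m ≫ (λ_ m).hom := h'
    _ = Y := key Y

/-- The left coaction on `d ≫ q` is coassociative (unconditionally). -/
lemma aux_B1 (D : Cmnd b) (q : b ⟶ a) :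
    (D.Δ ▷ q ≫ (α_ D.c D.c q).hom) ≫ D.Δ ▷ (D.c ≫ q) ≫ (α_ D.c D.c (D.c ≫ q)).hom
    = (D.Δ ▷ q ≫ (α_ D.c D.c q).hom) ≫ D.c ◁ (D.Δ ▷ q ≫ (α_ D.c D.c q).hom) := by
  calc (D.Δ ▷ q ≫ (α_ D.c D.c q).hom) ≫ D.Δ ▷ (D.c ≫ q) ≫ (α_ D.c D.c (D.c ≫ q)).hom
      = (D.Δ ≫ D.Δ ▷ D.c ≫ (α_ D.c D.c D.c).hom) ▷ q ≫ (α_ D.c (D.c ≫ D.c) q).hom ≫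
          D.c ◁ (α_ D.c D.c q).hom := by bicategory
    _ = (D.Δ ≫ D.c ◁ D.Δ) ▷ q ≫ (α_ D.c (D.c ≫ D.c) q).hom ≫
          D.c ◁ (α_ D.c D.c q).hom := by rw [D.coassoc]
    _ = (D.Δ ▷ q ≫ (α_ D.c D.c q).hom) ≫ D.c ◁ (D.Δ ▷ q ≫ (α_ D.c D.c q).hom) := by
          bicategory

/-- The left coaction on `d ≫ q` is counital (unconditionally). -/
lemma aux_B2 (D : Cmnd b) (q : b ⟶ a) :
    (D.Δ ▷ q ≫ (α_ D.c D.c q).hom) ≫ D.ε ▷ (D.c ≫ q) ≫ (λ_ (D.c ≫ q)).hom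
    = 𝟙 (D.c ≫ q) := by
  calc (D.Δ ▷ q ≫ (α_ D.c D.c q).hom) ≫ D.ε ▷ (D.c ≫ q) ≫ (λ_ (D.c ≫ q)).hom
      = (D.Δ ≫ D.ε ▷ D.c ≫ (λ_ D.c).hom) ▷ q := by bicategory
    _ = 𝟙 (D.c ≫ q) := by rw [D.counit_left]; simp

/-- The two coactions on `d ≫ q` are compatible (unconditionally). -/
lemma aux_B5 (D : Cmnd b) (C : Cmnd a) (q : b ⟶ a) (α : D.c ≫ q ⟶ q ≫ C.c) :
    (D.Δ ▷ q ≫ (α_ D.c D.c q).hom ≫ D.c ◁ α ≫ (α_ D.c q C.c).inv) ≫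
      (D.Δ ▷ q ≫ (α_ D.c D.c q).hom) ▷ C.c ≫ (α_ D.c (D.c ≫ q) C.c).hom
    = (D.Δ ▷ q ≫ (α_ D.c D.c q).hom) ≫
        D.c ◁ (D.Δ ▷ q ≫ (α_ D.c D.c q).hom ≫ D.c ◁ α ≫ (α_ D.c q C.c).inv) := by
  calc (D.Δ ▷ q ≫ (α_ D.c D.c q).hom ≫ D.c ◁ α ≫ (α_ D.c q C.c).inv) ≫
      (D.Δ ▷ q ≫ (α_ D.c D.c q).hom) ▷ C.c ≫ (α_ D.c (D.c ≫ q) C.c).hom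
      = D.Δ ▷ q ≫ (α_ D.c D.c q).hom ≫ (D.c ◁ α ≫ D.Δ ▷ (q ≫ C.c)) ≫
          (α_ D.c D.c (q ≫ C.c)).hom ≫ D.c ◁ (α_ D.c q C.c).inv := by bicategory
    _ = D.Δ ▷ q ≫ (α_ D.c D.c q).hom ≫ (D.Δ ▷ (D.c ≫ q) ≫ (D.c ≫ D.c) ◁ α) ≫
          (α_ D.c D.c (q ≫ C.c)).hom ≫ D.c ◁ (α_ D.c q C.c).inv := by
            rw [whisker_exchange D.Δ α]
    _ = (D.Δ ≫ D.Δ ▷ D.c ≫ (α_ D.c D.c D.c).hom) ▷ q ≫ (α_ D.c (D.c ≫ D.c) q).hom ≫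
          D.c ◁ (α_ D.c D.c q).hom ≫ D.c ◁ (D.c ◁ α) ≫ D.c ◁ (α_ D.c q C.c).inv := by
            bicategory
    _ = (D.Δ ≫ D.c ◁ D.Δ) ▷ q ≫ (α_ D.c (D.c ≫ D.c) q).hom ≫
          D.c ◁ (α_ D.c D.c q).hom ≫ D.c ◁ (D.c ◁ α) ≫ D.c ◁ (α_ D.c q C.c).inv := by
            rw [D.coassoc]
    _ = (D.Δ ▷ q ≫ (α_ D.c D.c q).hom) ≫
          D.c ◁ (D.Δ ▷ q ≫ (α_ D.c D.c q).hom ≫ D.c ◁ α ≫ (α_ D.c q C.c).inv) := by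
            bicategory

/-- Key rewriting of `rho ≫ rho ▷ c`. -/
lemma aux_key (D : Cmnd b) (C : Cmnd a) (q : b ⟶ a) (α : D.c ≫ q ⟶ q ≫ C.c) :
    (D.Δ ▷ q ≫ (α_ D.c D.c q).hom ≫ D.c ◁ α ≫ (α_ D.c q C.c).inv) ≫
      (D.Δ ▷ q ≫ (α_ D.c D.c q).hom ≫ D.c ◁ α ≫ (α_ D.c q C.c).inv) ▷ C.c
    = (D.Δ ▷ q ≫ (α_ D.c D.c q).hom ≫
        D.c ◁ (D.Δ ▷ q ≫ (α_ D.c D.c q).hom ≫ D.c ◁ α ≫ (α_ D.c q C.c).inv ≫ α ▷ C.c)) ≫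
        (α_ D.c (q ≫ C.c) C.c).inv ≫ (α_ D.c q C.c).inv ▷ C.c := by
  calc (D.Δ ▷ q ≫ (α_ D.c D.c q).hom ≫ D.c ◁ α ≫ (α_ D.c q C.c).inv) ≫
      (D.Δ ▷ q ≫ (α_ D.c D.c q).hom ≫ D.c ◁ α ≫ (α_ D.c q C.c).inv) ▷ C.c
      = D.Δ ▷ q ≫ (α_ D.c D.c q).hom ≫ (D.c ◁ α ≫ D.Δ ▷ (q ≫ C.c)) ≫
          (α_ D.c D.c (q ≫ C.c)).hom ≫ D.c ◁ (α_ D.c q C.c).inv ≫ D.c ◁ (α ▷ C.c) ≫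
          (α_ D.c (q ≫ C.c) C.c).inv ≫ (α_ D.c q C.c).inv ▷ C.c := by bicategory
    _ = D.Δ ▷ q ≫ (α_ D.c D.c q).hom ≫ (D.Δ ▷ (D.c ≫ q) ≫ (D.c ≫ D.c) ◁ α) ≫
          (α_ D.c D.c (q ≫ C.c)).hom ≫ D.c ◁ (α_ D.c q C.c).inv ≫ D.c ◁ (α ▷ C.c) ≫
          (α_ D.c (q ≫ C.c) C.c).inv ≫ (α_ D.c q C.c).inv ▷ C.c := by
            rw [whisker_exchange D.Δ α]
    _ = (D.Δ ≫ D.Δ ▷ D.c ≫ (α_ D.c D.c D.c).hom) ▷ q ≫ (α_ D.c (D.c ≫ D.c) q).hom ≫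
          D.c ◁ (α_ D.c D.c q).hom ≫ D.c ◁ (D.c ◁ α) ≫ D.c ◁ (α_ D.c q C.c).inv ≫
          D.c ◁ (α ▷ C.c) ≫
          (α_ D.c (q ≫ C.c) C.c).inv ≫ (α_ D.c q C.c).inv ▷ C.c := by bicategory
    _ = (D.Δ ≫ D.c ◁ D.Δ) ▷ q ≫ (α_ D.c (D.c ≫ D.c) q).hom ≫
          D.c ◁ (α_ D.c D.c q).hom ≫ D.c ◁ (D.c ◁ α) ≫ D.c ◁ (α_ D.c q C.c).inv ≫
          D.c ◁ (α ▷ C.c) ≫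
          (α_ D.c (q ≫ C.c) C.c).inv ≫ (α_ D.c q C.c).inv ▷ C.c := by rw [D.coassoc]
    _ = (D.Δ ▷ q ≫ (α_ D.c D.c q).hom ≫
          D.c ◁ (D.Δ ▷ q ≫ (α_ D.c D.c q).hom ≫ D.c ◁ α ≫ (α_ D.c q C.c).inv ≫ α ▷ C.c)) ≫
          (α_ D.c (q ≫ C.c) C.c).inv ≫ (α_ D.c q C.c).inv ▷ C.c := by bicategory

/-- Key rewriting of `rho ≫ (m ◁ Δ') ≫ assoc⁻¹` (pure coherence). -/
lemma aux_key2 (D : Cmnd b) (C : Cmnd a) (q : b ⟶ a) (α : D.c ≫ q ⟶ q ≫ C.c) :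
    (D.Δ ▷ q ≫ (α_ D.c D.c q).hom ≫ D.c ◁ α ≫ (α_ D.c q C.c).inv) ≫
      (D.c ≫ q) ◁ C.Δ ≫ (α_ (D.c ≫ q) C.c C.c).inv
    = (D.Δ ▷ q ≫ (α_ D.c D.c q).hom ≫
        D.c ◁ (α ≫ q ◁ C.Δ ≫ (α_ q C.c C.c).inv)) ≫
        (α_ D.c (q ≫ C.c) C.c).inv ≫ (α_ D.c q C.c).inv ▷ C.c := by
  bicategory

/-- Key rewriting of `rho ≫ (m ◁ ε') ≫ runitor` (pure coherence). -/
lemma aux_key4 (D : Cmnd b) (C : Cmnd a) (q : b ⟶ a) (α : D.c ≫ q ⟶ q ≫ C.c) :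
    (D.Δ ▷ q ≫ (α_ D.c D.c q).hom ≫ D.c ◁ α ≫ (α_ D.c q C.c).inv) ≫
      (D.c ≫ q) ◁ C.ε ≫ (ρ_ (D.c ≫ q)).hom
    = D.Δ ▷ q ≫ (α_ D.c D.c q).hom ≫ D.c ◁ (α ≫ q ◁ C.ε ≫ (ρ_ q).hom) := by
  bicategory

/-- Pure-coherence form of the right counit computation. -/
lemma aux_key4b (D : Cmnd b) (q : b ⟶ a) :
    D.Δ ▷ q ≫ (α_ D.c D.c q).hom ≫ D.c ◁ (D.ε ▷ q ≫ (λ_ q).hom)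
    = (D.Δ ≫ D.c ◁ D.ε ≫ (ρ_ D.c).hom) ▷ q := by
  bicategory

end AuxComonadBicomodule

/-- `(q, α)` is a right comonad-morphism from `D` to `C` if and only if `d ≫ q` is a
`D`-`C`-bicomodule, with left `D`-coaction `Δ_d ▷ q` (followed by the associator) and
right `C`-coaction `(d ◁ α) ∘ (Δ_d ▷ q)` (with associators inserted). -/
theorem isRightComonadMorphism_iff_isBicomodule {a b : 𝒷} (D : Cmnd b) (C : Cmnd a)
    (q : b ⟶ a) (α : D.c ≫ q ⟶ q ≫ C.c) :
    IsRightComonadMorphism D C q α ↔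
      IsBicomodule D C (D.c ≫ q)
        (D.Δ ▷ q ≫ (α_ D.c D.c q).hom)
        (D.Δ ▷ q ≫ (α_ D.c D.c q).hom ≫ D.c ◁ α ≫ (α_ D.c q C.c).inv) := by
  unfold IsRightComonadMorphism IsBicomodule
  constructor
  · rintro ⟨h1, h2⟩
    refine ⟨aux_B1 D q, aux_B2 D q, ?_, ?_, aux_B5 D C q α⟩
    · rw [aux_key2 D C q α, aux_key D C q α, h1]
    · rw [aux_key4 D C q α, h2, aux_key4b D q, D.counit_right]
      simp
  · rintro ⟨h1, h2, h3, h4, h5⟩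
    constructor
    · rw [aux_key2 D C q α, aux_key D C q α] at h3
      apply aux_cancel D q
      have h3' := congrArg
        (fun t => t ≫ (α_ D.c q C.c).hom ▷ C.c ≫ (α_ D.c (q ≫ C.c) C.c).hom) h3
      simp only [Category.assoc, inv_hom_whiskerRight, inv_hom_whiskerRight_assoc,
        Iso.inv_hom_id, Iso.inv_hom_id_assoc, Category.comp_id, Category.id_comp] at h3'
      exact h3'
    · apply aux_cancel D q
      calc D.Δ ▷ q ≫ (α_ D.c D.c q).hom ≫ D.c ◁ (α ≫ q ◁ C.ε ≫ (ρ_ q).hom)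
          = (D.Δ ▷ q ≫ (α_ D.c D.c q).hom ≫ D.c ◁ α ≫ (α_ D.c q C.c).inv) ≫
              (D.c ≫ q) ◁ C.ε ≫ (ρ_ (D.c ≫ q)).hom := (aux_key4 D C q α).symm
        _ = 𝟙 (D.c ≫ q) := h4
        _ = (D.Δ ≫ D.c ◁ D.ε ≫ (ρ_ D.c).hom) ▷ q := by rw [D.counit_right]; simp
        _ = D.Δ ▷ q ≫ (α_ D.c D.c q).hom ≫ D.c ◁ (D.ε ▷ q ≫ (λ_ q).hom) :=
            (aux_key4b D q).symm
end

section
/- Let F ⊣ G with F : 𝒜 → ℬ, G : ℬ → 𝒜, and H ⊣ K with H : ℬ → 𝒞, K : 𝒞 → ℬ, and Z : ℬ → 𝒟 a functor. Then: (i) if F is separable (the unit η of F ⊣ G is a split natural monomorphism) and H is G-separable (there is a natural ν : GKH → G with ν ∘ Gζ = id_G, where ζ is the unit of H ⊣ K), then the composite HF is separable; (ii) if H is Z-separable, then HF is ZF-separable. -/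
open CategoryTheory

universe v₁ v₂ v₃ v₄ u₁ u₂ u₃ u₄

/-- `F` with right adjoint `G` is separable: the unit of the adjunction is split by a
natural transformation. -/
def SeparableAdj {𝒜 : Type u₁} [Category.{v₁} 𝒜] {ℬ : Type u₂} [Category.{v₂} ℬ]
    {F : 𝒜 ⥤ ℬ} {G : ℬ ⥤ 𝒜} (adj : F ⊣ G) : Prop :=
  ∃ μ : F ⋙ G ⟶ 𝟭 𝒜, adj.unit ≫ μ = 𝟙 (𝟭 𝒜)

/-- `F` (with right adjoint `G`, unit `η`) is `W`-separable (separable of the second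
kind): there is a natural transformation `ν : (F ⋙ G) ⋙ W ⟶ W` with `ν ∘ Wη = id`. -/
def HSeparableAdj {𝒜 : Type u₁} [Category.{v₁} 𝒜] {ℬ : Type u₂} [Category.{v₂} ℬ]
    {𝒞 : Type u₃} [Category.{v₃} 𝒞]
    {F : 𝒜 ⥤ ℬ} {G : ℬ ⥤ 𝒜} (adj : F ⊣ G) (W : 𝒜 ⥤ 𝒞) : Prop :=
  ∃ ν : (F ⋙ G) ⋙ W ⟶ W, Functor.whiskerRight adj.unit W ≫ ν = W.leftUnitor.hom

/-- Composition of (relative) separable functors: given adjunctions `F ⊣ G` and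
`H ⊣ K` and a functor `Z : ℬ ⥤ 𝒟`, (i) if `F` is separable and `H` is `G`-separable,
then the composite `F ⋙ H` (with right adjoint `K ⋙ G`) is separable; (ii) if `H` is
`Z`-separable, then `F ⋙ H` is `ZF`-separable. -/
theorem separable_comp {𝒜 : Type u₁} [Category.{v₁} 𝒜] {ℬ : Type u₂} [Category.{v₂} ℬ]
    {𝒞 : Type u₃} [Category.{v₃} 𝒞] {𝒟 : Type u₄} [Category.{v₄} 𝒟]
    (F : 𝒜 ⥤ ℬ) (G : ℬ ⥤ 𝒜) (adj₁ : F ⊣ G)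
    (H : ℬ ⥤ 𝒞) (K : 𝒞 ⥤ ℬ) (adj₂ : H ⊣ K) (Z : ℬ ⥤ 𝒟) :
    (SeparableAdj adj₁ → HSeparableAdj adj₂ G → SeparableAdj (adj₁.comp adj₂)) ∧
    (HSeparableAdj adj₂ Z → HSeparableAdj (adj₁.comp adj₂) (F ⋙ Z)) := by
  constructor
  · rintro ⟨μ, hμ⟩ ⟨ν, hν⟩
    have hν' : ∀ b : ℬ, G.map (adj₂.unit.app b) ≫ ν.app b = 𝟙 (G.obj b) := by
      intro b
      have := congrArg (fun t => t.app b) hν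
      simpa using this
    have hμ' : ∀ a : 𝒜, adj₁.unit.app a ≫ μ.app a = 𝟙 a := by
      intro a
      have := congrArg (fun t => t.app a) hμ
      simpa using this
    refine ⟨{ app := fun a => ν.app (F.obj a) ≫ μ.app a, naturality := ?_ }, ?_⟩
    · intro a b f
      have h1 := ν.naturality (F.map f)
      have h2 := μ.naturality f
      simp only [Functor.comp_obj, Functor.comp_map, Functor.id_obj, Functor.id_map] at *
      rw [reassoc_of% h1, h2, Category.assoc]
    · ext a
      simp [reassoc_of% hν' (F.obj a), hμ' a]
  · rintro ⟨ν, hν⟩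
    have hν' : ∀ b : ℬ, Z.map (adj₂.unit.app b) ≫ ν.app b = 𝟙 (Z.obj b) := by
      intro b
      have := congrArg (fun t => t.app b) hν
      simpa using this
    refine ⟨{ app := fun a => (Z.map (adj₁.counit.app (K.obj (H.obj (F.obj a)))) ≫ ν.app (F.obj a)), naturality := ?_ }, ?_⟩
    · intro a b f
      have h1 := adj₁.counit.naturality (K.map (H.map (F.map f)))
      have h2 := ν.naturality (F.map f)
      simp only [Functor.comp_obj, Functor.comp_map, Functor.id_obj, Functor.id_map] at *
      rw [← Z.map_comp_assoc, h1, Z.map_comp_assoc, h2, Category.assoc]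
    · ext a
      have tri : F.map (adj₁.unit.app a) ≫ adj₁.counit.app (F.obj a) = 𝟙 (F.obj a) :=
        adj₁.left_triangle_components a
      have nat := adj₁.counit.naturality (adj₂.unit.app (F.obj a))
      simp only [Functor.id_obj, Functor.id_map, Functor.comp_obj, Functor.comp_map] at nat
      have tri' : Z.map (F.map (adj₁.unit.app a)) ≫ Z.map (adj₁.counit.app (F.obj a)) =
          𝟙 (Z.obj (F.obj a)) := by rw [← Z.map_comp, tri]; simp
      simp only [Functor.whiskerRight_app, Functor.comp_obj, Functor.leftUnitor_hom_app,
        Functor.comp_map, NatTrans.comp_app, Adjunction.comp_unit_app]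
      have nat2 : Z.map (F.map (G.map (adj₂.unit.app (F.obj a)))) ≫
          Z.map (adj₁.counit.app (K.obj (H.obj (F.obj a)))) =
          Z.map (adj₁.counit.app (F.obj a)) ≫ Z.map (adj₂.unit.app (F.obj a)) := by
        rw [← Z.map_comp, nat, Z.map_comp]
      rw [F.map_comp, Z.map_comp]
      simp only [Category.assoc]
      rw [reassoc_of% nat2, reassoc_of% tri']
      exact hν' (F.obj a)
end
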